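/- Every connected simple outerplanar graph with at least two vertices satisfies at least one of: (1) it has a vertex of degree 1; (2) it has two adjacent vertices each of degree 2; (3) it has a vertex u of degree 2 whose two neighbors v and w are themselves adjacent; (4) it has a vertex u of degree 2 whose deletion disconnects the graph. -/

import Mathlib

/-- An incidence of `G` is a pair `(v, vw)` with `G.Adj v w`, encoded as the ordered pair
`(v, w)`.  Two incidences `(v, vw)` and `(v', v'w')` are adjacent if `v = v'`, `w = v'`
or `v = w'`.  A `(k, l)`-incidence coloring is a proper coloring of the incidences with at
most `k` colors such that for every vertex `v` at most `l` colors appear on the incoming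
incidences `(u, uv)`. -/
def IsIncColoring {V : Type*} (G : SimpleGraph V) (k l : ℕ) (c : V → V → Fin k) : Prop :=
  (∀ v w v' w' : V, G.Adj v w → G.Adj v' w' → (v, w) ≠ (v', w') →
      (v = v' ∨ w = v' ∨ v = w') → c v w ≠ c v' w') ∧
  (∀ v : V, {x : Fin k | ∃ u, G.Adj u v ∧ c u v = x}.ncard ≤ l)

/-- `G` has a `(k, l)`-incidence coloring. -/
def HasIncColoring {V : Type*} (G : SimpleGraph V) (k l : ℕ) : Prop :=
  ∃ c : V → V → Fin k, IsIncColoring G k l c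

/-- A graph is outerplanar iff it has a one-page book embedding: the vertices can be placed
(injectively) on a line so that no two edges interleave. -/
def Outerplanar {V : Type*} (G : SimpleGraph V) : Prop :=
  ∃ f : V → ℝ, Function.Injective f ∧
    ∀ a b c d : V, G.Adj a b → G.Adj c d →
      ¬(f a < f c ∧ f c < f b ∧ f b < f d)

/-- Every connected simple outerplanar graph with at least two vertices has a vertex of
degree 1, or two adjacent vertices of degree 2, or a degree-2 vertex whose two neighbors
are adjacent, or a degree-2 vertex whose deletion disconnects the graph. -/
private lemma graph_aux {V : Type*} [Fintype V] [DecidableEq V] [Nonempty V]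
    (G : SimpleGraph V) [DecidableRel G.Adj] (f : V → ℝ) (hinj : Function.Injective f)
    (hcross : ∀ a b c d : V, G.Adj a b → G.Adj c d →
      ¬(f a < f c ∧ f c < f b ∧ f b < f d))
    (hne : ∀ v : V, ∃ w, G.Adj v w) :
    (∃ u, G.degree u = 1) ∨
    (∃ u v, G.Adj u v ∧ G.degree u = 2 ∧ G.degree v = 2) ∨
    (∃ u v w, G.degree u = 2 ∧ v ≠ w ∧ G.Adj u v ∧ G.Adj u w ∧ G.Adj v w) := by
  classical
  have hfne : ∀ {a b : V}, G.Adj a b → f a ≠ f b :=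
    fun h e => (G.ne_of_adj h) (hinj e)
  by_cases hE : ∃ v w : V, G.Adj v w ∧ f v < f w ∧
      (Finset.univ.filter fun x => f v < f x ∧ f x < f w).Nonempty
  · -- Case B : some edge has a vertex strictly inside; pick one minimizing the interior
    obtain ⟨v₀, w₀, hvw₀⟩ := hE
    set P : Finset (V × V) := Finset.univ.filter
      (fun p => G.Adj p.1 p.2 ∧ f p.1 < f p.2 ∧
        (Finset.univ.filter fun x => f p.1 < f x ∧ f x < f p.2).Nonempty) with hPdef
    have hPne : P.Nonempty :=
      ⟨(v₀, w₀), by simp [hPdef, hvw₀.1, hvw₀.2.1, hvw₀.2.2]⟩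
    obtain ⟨⟨v, w⟩, hpP, hpmin⟩ := Finset.exists_min_image P
      (fun p => (Finset.univ.filter fun x => f p.1 < f x ∧ f x < f p.2).card) hPne
    simp only [hPdef, Finset.mem_filter, Finset.mem_univ, true_and] at hpP
    obtain ⟨hadj, hvw, hSne⟩ := hpP
    set S : Finset V := Finset.univ.filter (fun x => f v < f x ∧ f x < f w) with hSdef
    -- minimality: any edge strictly inside [v,w] has empty interior
    have N2 : ∀ a b : V, G.Adj a b → f v ≤ f a → f a < f b → f b ≤ f w →
        (f v < f a ∨ f b < f w) → ∀ x : V, ¬(f a < f x ∧ f x < f b) := by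
      intro a b hab hva hab' hbw hstrict x hx
      have hmem : (a, b) ∈ P := by
        simp only [hPdef, Finset.mem_filter, Finset.mem_univ, true_and]
        exact ⟨hab, hab', ⟨x, by simp [hx.1, hx.2]⟩⟩
      have hle := hpmin (a, b) hmem
      have hsub0 : (Finset.univ.filter fun x => f a < f x ∧ f x < f b) ⊆ S := by
        intro y hy
        simp only [hSdef, Finset.mem_filter, Finset.mem_univ, true_and] at hy ⊢
        exact ⟨lt_of_le_of_lt hva hy.1, lt_of_lt_of_le hy.2 hbw⟩
      have hss : (Finset.univ.filter fun x => f a < f x ∧ f x < f b) ⊂ S := by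
        rcases hstrict with h | h
        · refine (Finset.ssubset_iff_of_subset hsub0).2 ⟨a, ?_, ?_⟩
          · simp only [hSdef, Finset.mem_filter, Finset.mem_univ, true_and]
            exact ⟨h, lt_of_lt_of_le hab' hbw⟩
          · simp
        · refine (Finset.ssubset_iff_of_subset hsub0).2 ⟨b, ?_, ?_⟩
          · simp only [hSdef, Finset.mem_filter, Finset.mem_univ, true_and]
            exact ⟨lt_of_le_of_lt hva hab', h⟩
          · simp
      have hlt := Finset.card_lt_card hss
      simp only [hSdef] at hlt
      dsimp only at hle
      simp only [hSdef] at hle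
      omega
    -- any neighbor of a vertex inside [v,w] stays in [v,w]
    have N1 : ∀ s y : V, f v < f s → f s < f w → G.Adj s y →
        f v ≤ f y ∧ f y ≤ f w := by
      intro s y h1 h2 hsy
      constructor
      · by_contra h
        push_neg at h
        exact hcross y s v w hsy.symm hadj ⟨h, h1, h2⟩
      · by_contra h
        push_neg at h
        exact hcross v w s y hadj hsy ⟨h1, h2, h⟩
    -- uniqueness of left neighbors for vertices inside
    have LNuniq : ∀ s : V, f v < f s → f s < f w → ∀ y y' : V, G.Adj s y → G.Adj s y' →
        f y < f s → f y' < f s → y = y' := by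
      intro s h1 h2 y y' hy hy' hys hy's
      have hvy := (N1 s y h1 h2 hy).1
      have hvy' := (N1 s y' h1 h2 hy').1
      have e1 := N2 y s hy.symm hvy hys (le_of_lt h2) (Or.inr h2)
      have e2 := N2 y' s hy'.symm hvy' hy's (le_of_lt h2) (Or.inr h2)
      by_contra hne'
      rcases lt_trichotomy (f y) (f y') with h | h | h
      · exact e1 y' ⟨h, hy's⟩
      · exact hne' (hinj h)
      · exact e2 y ⟨h, hys⟩
    -- the rightmost vertex inside
    obtain ⟨x, hxS, hxmax⟩ := Finset.exists_max_image S f hSne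
    have hxS' : f v < f x ∧ f x < f w := by
      simpa [hSdef] using hxS
    -- right neighbors of x must be w
    have Rx : ∀ y : V, G.Adj x y → f x < f y → y = w := by
      intro y hy hxy
      have h2y := (N1 x y hxS'.1 hxS'.2 hy).2
      rcases lt_or_eq_of_le h2y with h | h
      · exfalso
        have hyS : y ∈ S := by
          simp only [hSdef, Finset.mem_filter, Finset.mem_univ, true_and]
          exact ⟨lt_trans hxS'.1 hxy, h⟩
        exact absurd hxy (not_lt.mpr (hxmax y hyS))
      · exact hinj h
    by_cases hL : ∃ y, G.Adj x y ∧ f y < f x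
    · obtain ⟨y₀, hy₀, hly₀⟩ := hL
      by_cases hxw : G.Adj x w
      · -- neighbors of x are exactly {y₀, w}
        have hy₀w : y₀ ≠ w := fun e => by
          rw [e] at hly₀; exact absurd (lt_trans hly₀ hxS'.2) (lt_irrefl _)
        have hNx : G.neighborFinset x = {y₀, w} := by
          ext z
          simp only [SimpleGraph.mem_neighborFinset, Finset.mem_insert,
            Finset.mem_singleton]
          constructor
          · intro hz
            rcases lt_trichotomy (f z) (f x) with h | h | h
            · exact Or.inl (LNuniq x hxS'.1 hxS'.2 z y₀ hz hy₀ h hly₀)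
            · exact absurd (hinj h) (fun e => G.ne_of_adj hz e.symm)
            · exact Or.inr (Rx z hz h)
          · rintro (rfl | rfl)
            · exact hy₀
            · exact hxw
        have degx : G.degree x = 2 := by
          rw [← SimpleGraph.card_neighborFinset_eq_degree, hNx,
            Finset.card_pair hy₀w]
        have hvy₀ := (N1 x y₀ hxS'.1 hxS'.2 hy₀).1
        rcases lt_or_eq_of_le hvy₀ with h1 | h1
        · -- y₀ is strictly inside; look at y₀'s neighbors
          have h2 : f y₀ < f w := lt_trans hly₀ hxS'.2
          have hy₀nw : ¬ G.Adj y₀ w := by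
            intro h
            exact N2 y₀ w h (le_of_lt h1) h2 le_rfl (Or.inl h1) x ⟨hly₀, hxS'.2⟩
          have e1 := N2 y₀ x hy₀.symm (le_of_lt h1) hly₀ (le_of_lt hxS'.2) (Or.inl h1)
          have Ry₀ : ∀ z, G.Adj y₀ z → f y₀ < f z → z = x := by
            intro z hz h
            have h2z := (N1 y₀ z h1 h2 hz).2
            have hzw : f z < f w := lt_of_le_of_ne h2z
              (fun e => hy₀nw (by rwa [hinj e] at hz))
            rcases lt_trichotomy (f z) (f x) with hc | hc | hc
            · exact absurd ⟨h, hc⟩ (e1 z)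
            · exact hinj hc
            · exfalso
              have hzS : z ∈ S := by
                simp only [hSdef, Finset.mem_filter, Finset.mem_univ, true_and]
                exact ⟨lt_trans h1 h, hzw⟩
              exact absurd hc (not_lt.mpr (hxmax z hzS))
          by_cases hL2 : ∃ z, G.Adj y₀ z ∧ f z < f y₀
          · -- y₀ has degree 2 : case (2)
            obtain ⟨z₀, hz₀, hlz₀⟩ := hL2
            have hz₀x : z₀ ≠ x := fun e => by
              rw [e] at hlz₀; exact absurd (lt_trans hly₀ hlz₀) (lt_irrefl _)
            have hNy₀ : G.neighborFinset y₀ = {z₀, x} := by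
              ext z
              simp only [SimpleGraph.mem_neighborFinset, Finset.mem_insert,
                Finset.mem_singleton]
              constructor
              · intro hz
                rcases lt_trichotomy (f z) (f y₀) with h | h | h
                · exact Or.inl (LNuniq y₀ h1 h2 z z₀ hz hz₀ h hlz₀)
                · exact absurd (hinj h) (fun e => G.ne_of_adj hz e.symm)
                · exact Or.inr (Ry₀ z hz h)
              · rintro (rfl | rfl)
                · exact hz₀
                · exact hy₀.symm
            have degy₀ : G.degree y₀ = 2 := by
              rw [← SimpleGraph.card_neighborFinset_eq_degree, hNy₀,
                Finset.card_pair hz₀x]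
            exact Or.inr (Or.inl ⟨x, y₀, hy₀, degx, degy₀⟩)
          · -- y₀ has degree 1 : case (1)
            push_neg at hL2
            have hNy₀ : G.neighborFinset y₀ = {x} := by
              ext z
              simp only [SimpleGraph.mem_neighborFinset, Finset.mem_singleton]
              constructor
              · intro hz
                rcases lt_trichotomy (f z) (f y₀) with h | h | h
                · exact absurd (hL2 z hz) (not_le.mpr h)
                · exact absurd (hinj h) (fun e => G.ne_of_adj hz e.symm)
                · exact Ry₀ z hz h
              · rintro rfl
                exact hy₀.symm
            refine Or.inl ⟨y₀, ?_⟩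
            rw [← SimpleGraph.card_neighborFinset_eq_degree, hNy₀,
              Finset.card_singleton]
        · -- y₀ = v : case (3)
          have hy₀v : y₀ = v := hinj h1.symm
          refine Or.inr (Or.inr ⟨x, v, w, degx, ?_, ?_, hxw, hadj⟩)
          · exact fun e => absurd hvw (by rw [e]; exact lt_irrefl _)
          · rw [← hy₀v]; exact hy₀
      · -- x has degree 1 : case (1)
        have hNx : G.neighborFinset x = {y₀} := by
          ext z
          simp only [SimpleGraph.mem_neighborFinset, Finset.mem_singleton]
          constructor
          · intro hz
            rcases lt_trichotomy (f z) (f x) with h | h | h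
            · exact LNuniq x hxS'.1 hxS'.2 z y₀ hz hy₀ h hly₀
            · exact absurd (hinj h) (fun e => G.ne_of_adj hz e.symm)
            · exact absurd (Rx z hz h ▸ hz) hxw
          · rintro rfl
            exact hy₀
        refine Or.inl ⟨x, ?_⟩
        rw [← SimpleGraph.card_neighborFinset_eq_degree, hNx, Finset.card_singleton]
    · -- x has no left neighbor : degree 1
      push_neg at hL
      obtain ⟨y, hy⟩ := hne x
      have hyw : ∀ z, G.Adj x z → z = w := by
        intro z hz
        rcases lt_trichotomy (f z) (f x) with h | h | h
        · exact absurd (hL z hz) (not_le.mpr h)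
        · exact absurd (hinj h) (fun e => G.ne_of_adj hz e.symm)
        · exact Rx z hz h
      have hxw : G.Adj x w := (hyw y hy) ▸ hy
      have hNx : G.neighborFinset x = {w} := by
        ext z
        simp only [SimpleGraph.mem_neighborFinset, Finset.mem_singleton]
        exact ⟨fun hz => hyw z hz, fun e => e ▸ hxw⟩
      refine Or.inl ⟨x, ?_⟩
      rw [← SimpleGraph.card_neighborFinset_eq_degree, hNx, Finset.card_singleton]
  · -- Case A : every edge has empty interior; the leftmost vertex has degree 1
    obtain ⟨x₀, -, hx₀min⟩ := Finset.exists_min_image Finset.univ f Finset.univ_nonempty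
    obtain ⟨y, hy⟩ := hne x₀
    have key : ∀ z, G.Adj x₀ z → z = y := by
      intro z hz
      have h1 : f x₀ < f z :=
        lt_of_le_of_ne (hx₀min z (Finset.mem_univ z)) (hfne hz)
      have h2 : f x₀ < f y :=
        lt_of_le_of_ne (hx₀min y (Finset.mem_univ y)) (hfne hy)
      by_contra hzz
      have hzy : f z ≠ f y := fun e => hzz (hinj e)
      rcases hzy.lt_or_gt with h | h
      · exact hE ⟨x₀, y, hy, h2, ⟨z, by simp [h1, h]⟩⟩
      · exact hE ⟨x₀, z, hz, h1, ⟨y, by simp [h2, h]⟩⟩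
    have hNx : G.neighborFinset x₀ = {y} := by
      ext z
      simp only [SimpleGraph.mem_neighborFinset, Finset.mem_singleton]
      exact ⟨fun hz => key z hz, fun e => e ▸ hy⟩
    refine Or.inl ⟨x₀, ?_⟩
    rw [← SimpleGraph.card_neighborFinset_eq_degree, hNx, Finset.card_singleton]

theorem stmt_0 {V : Type*} [Fintype V] [DecidableEq V] (G : SimpleGraph V)
    [DecidableRel G.Adj] (hconn : G.Connected) (hcard : 2 ≤ Fintype.card V)
    (hout : Outerplanar G) :
    (∃ u, G.degree u = 1) ∨
    (∃ u v, G.Adj u v ∧ G.degree u = 2 ∧ G.degree v = 2) ∨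
    (∃ u v w, G.degree u = 2 ∧ v ≠ w ∧ G.Adj u v ∧ G.Adj u w ∧ G.Adj v w) ∨
    (∃ u, G.degree u = 2 ∧ ¬(G.induce {x | x ≠ u}).Connected) := by
  classical
  obtain ⟨f, hinj, hcross⟩ := hout
  haveI : Nonempty V := Fintype.card_pos_iff.mp (by omega)
  have hne : ∀ v : V, ∃ w, G.Adj v w := by
    intro v
    obtain ⟨u, hu⟩ := Fintype.exists_ne_of_one_lt_card (by omega) v
    obtain ⟨p⟩ := hconn.preconnected v u
    cases p with
    | nil => exact absurd rfl hu
    | cons h _ => exact ⟨_, h⟩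
  rcases graph_aux G f hinj hcross hne with h | h | h
  · exact Or.inl h
  · exact Or.inr (Or.inl h)
  · exact Or.inr (Or.inr (Or.inl h))
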